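/- arXiv:1011.2860 — 2 statements merged into one kernel-verified Lean document; each statement's English description precedes it below -/
import Mathlib

section
/- Let R be a commutative ring and G a monic Gröbner basis of the ideal I = ⟨G⟩ in the free R-algebra R⟨X⟩ = R⟨X₁,...,Xₙ⟩ with respect to a monomial ordering ≺ on B_R. Then the canonical image of the set N(G) of normal words (mod G) under the quotient map R⟨X⟩ → R⟨X⟩/I forms a free R-basis of the R-module R⟨X⟩/I. -/
open scoped Classical

/-- Words in the alphabet `X₁,...,Xₙ`: the standard basis `B` of monomials of the free algebra. -/
abbrev Word (n : ℕ) : Type := FreeMonoid (Fin n)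

/-- The free `R`-algebra `R⟨X₁,...,Xₙ⟩`, realized as the monoid algebra on words. -/
abbrev FreeAlg (R : Type) [CommRing R] (n : ℕ) : Type := MonoidAlgebra R (Word n)

/-- `v` divides `u` as words: `u = w * v * s` for some words `w, s`. -/
def WordDvd {n : ℕ} (v u : Word n) : Prop := ∃ w s : Word n, u = w * v * s

/-- A monomial ordering on the words in `X₁,...,Xₙ`: a well-ordering `≺` such that
(M1) `u ≺ v` implies `w*u*s ≺ w*v*s`, and (M2) `w = u*v` implies `u ⪯ w` and `v ⪯ w`. -/
structure MonomialOrdering (n : ℕ) where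
  lt : Word n → Word n → Prop
  strictTotal : IsStrictTotalOrder (Word n) lt
  wellFounded : WellFounded lt
  mul_compat : ∀ w u v s : Word n, lt u v → lt (w * u * s) (w * v * s)
  factor_le : ∀ u v : Word n, ¬ lt (u * v) u ∧ ¬ lt (u * v) v

namespace MonomialOrdering

/-- `u ⪯ v` for a monomial ordering. -/
def le {n : ℕ} (o : MonomialOrdering n) (u v : Word n) : Prop := u = v ∨ o.lt u v

end MonomialOrdering

/-- The leading monomial `LM(f)` of `f`: the `≺`-greatest word occurring in `f`
(with junk value `1` if `f = 0`). -/
noncomputable def LM {R : Type} [CommRing R] {n : ℕ} (o : MonomialOrdering n)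
    (f : FreeAlg R n) : Word n :=
  if h : ∃ w, w ∈ f.coeff.support ∧ ∀ u ∈ f.coeff.support, o.le u w then h.choose else 1

/-- The leading coefficient `LC(f)` of `f`: the coefficient of `LM(f)` in `f`. -/
noncomputable def LC {R : Type} [CommRing R] {n : ℕ} (o : MonomialOrdering n)
    (f : FreeAlg R n) : R := f.coeff (LM o f)

/-- A subset `G` is monic if every `g ∈ G` is nonzero with leading coefficient `1`. -/
def IsMonicSet {R : Type} [CommRing R] {n : ℕ} (o : MonomialOrdering n)
    (G : Set (FreeAlg R n)) : Prop := ∀ g ∈ G, g ≠ 0 ∧ LC o g = 1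

/-- `G` is a monic Gröbner basis of the two-sided ideal `I`: a monic subset of `I` such that
the leading monomial of every nonzero `f ∈ I` is divisible by `LM(g)` for some `g ∈ G`. -/
def IsMonicGB {R : Type} [CommRing R] {n : ℕ} (o : MonomialOrdering n)
    (G : Set (FreeAlg R n)) (I : TwoSidedIdeal (FreeAlg R n)) : Prop :=
  (∀ g ∈ G, g ∈ I) ∧ IsMonicSet o G ∧
    ∀ f : FreeAlg R n, f ∈ I → f ≠ 0 → ∃ g ∈ G, WordDvd (LM o g) (LM o f)

/-- The word `u` viewed as a monomial (with coefficient `1`) of the free algebra. -/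
noncomputable def mono (R : Type) [CommRing R] {n : ℕ} (u : Word n) : FreeAlg R n :=
  MonoidAlgebra.single u 1

/-- `f` has a Gröbner representation `f = Σ_{i} λ_i u_i g_i v_i` with
`LM(u_i g_i v_i) ⪯ LM(f)` whenever `λ_i ≠ 0`. -/
def HasGroebnerRep {R : Type} [CommRing R] {n : ℕ} (o : MonomialOrdering n)
    (G : Set (FreeAlg R n)) (f : FreeAlg R n) : Prop :=
  ∃ (m : ℕ) (lam : Fin m → R) (u v : Fin m → Word n) (g : Fin m → FreeAlg R n),
    (∀ i, g i ∈ G) ∧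
    f = ∑ i, lam i • (mono R (u i) * g i * mono R (v i)) ∧
    ∀ i, lam i ≠ 0 → o.le (LM o (mono R (u i) * g i * mono R (v i))) (LM o f)

/-- The set `N(G)` of normal words (mod `G`): words divisible by no `LM(g)`, `g ∈ G`. -/
def NSet {R : Type} [CommRing R] {n : ℕ} (o : MonomialOrdering n)
    (G : Set (FreeAlg R n)) : Set (Word n) :=
  {u : Word n | ∀ g ∈ G, ¬ WordDvd (LM o g) u}

/-- `f` is a normal element (mod `G`): every word occurring in `f` is normal. -/
def IsNormal {R : Type} [CommRing R] {n : ℕ} (o : MonomialOrdering n)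
    (G : Set (FreeAlg R n)) (f : FreeAlg R n) : Prop :=
  ∀ u ∈ f.coeff.support, u ∈ NSet o G

/-- `G` is LM-reduced: `LM(g) ∤ LM(g')` for distinct `g, g' ∈ G`. -/
def LMReduced {R : Type} [CommRing R] {n : ℕ} (o : MonomialOrdering n)
    (G : Set (FreeAlg R n)) : Prop :=
  ∀ g ∈ G, ∀ g' ∈ G, g ≠ g' → ¬ WordDvd (LM o g) (LM o g')

/-- A two-sided ideal of the free `R`-algebra, viewed as an `R`-submodule. -/
def tsiSubmodule {R : Type} [CommRing R] {n : ℕ} (I : TwoSidedIdeal (FreeAlg R n)) :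
    Submodule R (FreeAlg R n) where
  carrier := {f : FreeAlg R n | f ∈ I}
  add_mem' ha hb := I.add_mem ha hb
  zero_mem' := I.zero_mem
  smul_mem' c x hx := by
    have : c • x = (algebraMap R (FreeAlg R n) c) * x := Algebra.smul_def c x
    rw [Set.mem_setOf_eq, this]
    exact I.mul_mem_left _ _ hx

section Aux
variable {R : Type} [CommRing R] {n : ℕ} (o : MonomialOrdering n)

lemma MonomialOrdering.le_trans {u v w : Word n} (h1 : o.le u v) (h2 : o.le v w) : o.le u w := by
  rcases h1 with rfl | h1
  · exact h2
  rcases h2 with rfl | h2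
  · exact Or.inr h1
  · exact Or.inr (o.strictTotal.trans _ _ _ h1 h2)

lemma exists_max (s : Finset (Word n)) (hs : s.Nonempty) :
    ∃ w ∈ s, ∀ u ∈ s, o.le u w := by
  classical
  induction s using Finset.induction_on with
  | empty => exact absurd hs (by simp)
  | @insert a s ha ih =>
    rcases s.eq_empty_or_nonempty with rfl | hs'
    · exact ⟨a, by simp, by simp [MonomialOrdering.le]⟩
    · obtain ⟨w, hw, hmax⟩ := ih hs'
      rcases (haveI := o.strictTotal; trichotomous_of o.lt a w) with h | h | h
      · exact ⟨w, Finset.mem_insert_of_mem hw, by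
          intro u hu
          rcases Finset.mem_insert.mp hu with rfl | hu
          · exact Or.inr h
          · exact hmax u hu⟩
      · exact ⟨w, Finset.mem_insert_of_mem hw, by
          intro u hu
          rcases Finset.mem_insert.mp hu with rfl | hu
          · exact Or.inl h
          · exact hmax u hu⟩
      · exact ⟨a, Finset.mem_insert_self a s, by
          intro u hu
          rcases Finset.mem_insert.mp hu with rfl | hu
          · exact Or.inl rfl
          · exact o.le_trans (hmax u hu) (Or.inr h)⟩

lemma LM_spec {f : FreeAlg R n} (hf : f ≠ 0) :
    LM o f ∈ f.coeff.support ∧ ∀ u ∈ f.coeff.support, o.le u (LM o f) := by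
  have h : ∃ w, w ∈ f.coeff.support ∧ ∀ u ∈ f.coeff.support, o.le u w := by
    obtain ⟨w, hw, hm⟩ := exists_max o f.coeff.support (Finsupp.support_nonempty_iff.mpr (by simpa using hf))
    exact ⟨w, hw, hm⟩
  rw [LM, dif_pos h]
  exact h.choose_spec

lemma le_antisymm' {u v : Word n} (h1 : o.le u v) (h2 : o.le v u) : u = v := by
  rcases h1 with rfl | h1
  · rfl
  rcases h2 with rfl | h2
  · rfl
  · exact absurd (o.strictTotal.trans _ _ _ h1 h2) (o.strictTotal.irrefl u)

lemma LM_unique {f : FreeAlg R n} {w : Word n} (hw : w ∈ f.coeff.support)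
    (hmax : ∀ u ∈ f.coeff.support, o.le u w) : LM o f = w := by
  have hf : f ≠ 0 := fun h => by simp [h] at hw
  obtain ⟨h1, h2⟩ := LM_spec o hf
  exact le_antisymm' o (hmax _ h1) (h2 _ hw)

lemma LM_lt_of_support {f : FreeAlg R n} {w : Word n} (hf : f ≠ 0)
    (h : ∀ u ∈ f.coeff.support, o.lt u w) : o.lt (LM o f) w :=
  h _ (LM_spec o hf).1

end Aux
section Aux2
variable {R : Type} [CommRing R] {n : ℕ} (o : MonomialOrdering n)

lemma conj_inj (a b : Word n) : Function.Injective (fun u : Word n => a * u * b) := by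
  intro u v h
  simp only at h
  exact mul_left_cancel (mul_right_cancel h)

lemma conj_eq (a b : Word n) (f : FreeAlg R n) :
    (mono R a * f * mono R b).coeff = Finsupp.mapDomain (fun u : Word n => a * u * b) f.coeff := by
  induction f using MonoidAlgebra.induction_linear with
  | zero => simp
  | add f g hf hg =>
      rw [mul_add, add_mul, MonoidAlgebra.coeff_add, hf, hg, MonoidAlgebra.coeff_add,
        Finsupp.mapDomain_add]
  | single u r =>
      rw [mono, mono, MonoidAlgebra.single_mul_single, MonoidAlgebra.single_mul_single,
        MonoidAlgebra.coeff_single, MonoidAlgebra.coeff_single, Finsupp.mapDomain_single]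
      simp

lemma conj_apply (a b : Word n) (f : FreeAlg R n) (u : Word n) :
    (mono R a * f * mono R b).coeff (a * u * b) = f.coeff u := by
  rw [conj_eq, Finsupp.mapDomain_apply (conj_inj a b)]

lemma conj_support (a b : Word n) (f : FreeAlg R n) :
    (mono R a * f * mono R b).coeff.support = f.coeff.support.image (fun u => a * u * b) := by
  rw [conj_eq, Finsupp.mapDomain_support_of_injective (conj_inj a b)]

lemma conj_ne_zero (a b : Word n) {f : FreeAlg R n} (hf : f ≠ 0) :
    mono R a * f * mono R b ≠ 0 := by
  rw [Ne, ← MonoidAlgebra.coeff_eq_zero, conj_eq]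
  exact fun h => hf (MonoidAlgebra.coeff_eq_zero.mp
    (Finsupp.mapDomain_injective (conj_inj a b) (by simpa using h)))

lemma mono_le_of_le {a b u v : Word n} (h : o.le u v) : o.le (a * u * b) (a * v * b) := by
  rcases h with rfl | h
  · exact Or.inl rfl
  · exact Or.inr (o.mul_compat a u v b h)

lemma LM_conj (a b : Word n) {f : FreeAlg R n} (hf : f ≠ 0) :
    LM o (mono R a * f * mono R b) = a * LM o f * b := by
  apply LM_unique
  · rw [conj_support]
    exact Finset.mem_image_of_mem _ (LM_spec o hf).1
  · intro u hu
    rw [conj_support] at hu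
    obtain ⟨v, hv, rfl⟩ := Finset.mem_image.mp hu
    exact mono_le_of_le o ((LM_spec o hf).2 v hv)

end Aux2
section Aux3
variable {R : Type} [CommRing R] {n : ℕ} (o : MonomialOrdering n)

lemma normal_mem_eq_zero {G : Set (FreeAlg R n)} {I : TwoSidedIdeal (FreeAlg R n)}
    (hGB : IsMonicGB o G I) {f : FreeAlg R n} (hfI : f ∈ I) (hN : IsNormal o G f) :
    f = 0 := by
  by_contra h
  obtain ⟨g, hg, hdvd⟩ := hGB.2.2 f hfI h
  exact hN _ (LM_spec o h).1 g hg hdvd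

lemma normal_of_mem_span {G : Set (FreeAlg R n)} {f : FreeAlg R n}
    (hf : f ∈ Submodule.span R (mono R '' NSet o G)) : IsNormal o G f := by
  induction hf using Submodule.span_induction with
  | mem x hx =>
      obtain ⟨u, hu, rfl⟩ := hx
      intro v hv
      have := Finsupp.support_single_subset (show v ∈ (Finsupp.single u (1 : R)).support from hv)
      simp only [Finset.mem_singleton] at this
      exact this ▸ hu
  | zero => intro v hv; simp at hv
  | add x y _ _ hx hy =>
      intro v hv
      rcases Finset.mem_union.mp (Finsupp.support_add (show v ∈ (x.coeff + y.coeff).support from hv)) with h | h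
      · exact hx v h
      · exact hy v h
  | smul c x _ hx =>
      intro v hv
      exact hx v (Finsupp.support_smul (show v ∈ (c • x.coeff).support from hv))

lemma mem_span_sup {G : Set (FreeAlg R n)} {I : TwoSidedIdeal (FreeAlg R n)}
    (hGB : IsMonicGB o G I) (f : FreeAlg R n) :
    f ∈ Submodule.span R (mono R '' NSet o G) ⊔ tsiSubmodule I := by
  set S := Submodule.span R (mono R '' NSet o G) ⊔ tsiSubmodule I with hS
  rcases eq_or_ne f 0 with rfl | hf0
  · exact S.zero_mem
  have key : ∀ w : Word n, ∀ f : FreeAlg R n, f ≠ 0 → LM o f = w → f ∈ S := by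
    intro w
    induction w using WellFounded.induction o.wellFounded with
    | _ w IH =>
      intro f hf0 hw
      have hwsupp : w ∈ f.coeff.support := hw ▸ (LM_spec o hf0).1
      have hmax : ∀ u ∈ f.coeff.support, o.le u w := hw ▸ (LM_spec o hf0).2
      have hc : f.coeff w ≠ 0 := Finsupp.mem_support_iff.mp hwsupp
      -- choose the element d to subtract
      by_cases hN : w ∈ NSet o G
      · -- normal case
        set d : FreeAlg R n := f.coeff w • mono R w with hd
        have hdS : d ∈ S := le_sup_left (α := Submodule R (FreeAlg R n))
          (Submodule.smul_mem _ _ (Submodule.subset_span (Set.mem_image_of_mem _ hN)))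
        have hsub : ∀ u ∈ (f - d).coeff.support, o.lt u w := by
          intro u hu
          have hne : u ≠ w := by
            intro rfl'
            subst rfl'
            have : (f - d).coeff u = 0 := by
              rw [hd, MonoidAlgebra.coeff_sub, Finsupp.sub_apply, MonoidAlgebra.coeff_smul,
                Finsupp.smul_apply, mono, MonoidAlgebra.coeff_single_apply]
              simp
            exact Finsupp.mem_support_iff.mp hu this
          have hu' : u ∈ f.coeff.support := by
            have : (f - d).coeff u ≠ 0 := Finsupp.mem_support_iff.mp hu
            have hdu : d.coeff u = 0 := by
              rw [hd, MonoidAlgebra.coeff_smul, Finsupp.smul_apply, mono,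
                MonoidAlgebra.coeff_single_apply]
              simp [Ne.symm hne]
            rw [MonoidAlgebra.coeff_sub, Finsupp.sub_apply, hdu, sub_zero] at this
            exact Finsupp.mem_support_iff.mpr this
          rcases hmax u hu' with rfl | h
          · exact absurd rfl hne
          · exact h
        rcases eq_or_ne (f - d) 0 with h0 | h0
        · have : f = d := by linear_combination (norm := abel) h0
          exact this ▸ hdS
        · have := IH _ (LM_lt_of_support o h0 hsub) _ h0 rfl
          have hfd : f = (f - d) + d := by abel
          exact hfd ▸ S.add_mem this hdS
      · -- reducible case
        simp only [NSet, Set.mem_setOf_eq] at hN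
        push_neg at hN
        obtain ⟨g, hg, hdvd⟩ := hN
        obtain ⟨a, b, hab⟩ := hdvd
        have hgne : g ≠ 0 := (hGB.2.1 g hg).1
        have hgc : g.coeff (LM o g) = 1 := (hGB.2.1 g hg).2
        set d : FreeAlg R n := f.coeff w • (mono R a * g * mono R b) with hd
        have hdI : d ∈ tsiSubmodule I :=
          Submodule.smul_mem _ _ (I.mul_mem_right _ _ (I.mul_mem_left _ _ (hGB.1 g hg)))
        have hdS : d ∈ S := le_sup_right (α := Submodule R (FreeAlg R n)) hdI
        have hdw : d.coeff w = f.coeff w := by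
          rw [hd, MonoidAlgebra.coeff_smul, Finsupp.smul_apply, hab, conj_apply, hgc, smul_eq_mul, mul_one]
        have hsub : ∀ u ∈ (f - d).coeff.support, o.lt u w := by
          intro u hu
          have hne : u ≠ w := by
            intro rfl'
            subst rfl'
            have : (f - d).coeff u = 0 := by rw [MonoidAlgebra.coeff_sub, Finsupp.sub_apply, hdw, sub_self]
            exact Finsupp.mem_support_iff.mp hu this
          have := Finsupp.support_sub (show u ∈ (f.coeff - d.coeff).support from hu)
          rcases Finset.mem_union.mp this with h | h
          · rcases hmax u h with rfl | h'
            · exact absurd rfl hne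
            · exact h'
          · have h' : u ∈ (mono R a * g * mono R b).coeff.support :=
              Finsupp.support_smul (show u ∈ (f.coeff w • (mono R a * g * mono R b).coeff).support from h)
            rw [conj_support] at h'
            obtain ⟨v, hv, rfl⟩ := Finset.mem_image.mp h'
            have hvlt : o.lt v (LM o g) := by
              rcases (LM_spec o hgne).2 v hv with rfl | h''
              · exact absurd hab.symm hne
              · exact h''
            exact hab ▸ o.mul_compat a v (LM o g) b hvlt
        rcases eq_or_ne (f - d) 0 with h0 | h0
        · have : f = d := by linear_combination (norm := abel) h0
          exact this ▸ hdS
        · have := IH _ (LM_lt_of_support o h0 hsub) _ h0 rfl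
          have hfd : f = (f - d) + d := by abel
          exact hfd ▸ S.add_mem this hdS
  exact key _ f hf0 rfl

end Aux3
/-- **Theorem 2.4 (iii).**  Let `G` be a monic Gröbner basis of the ideal `I = ⟨G⟩` of the
free `R`-algebra `R⟨X₁,...,Xₙ⟩`.  Then the canonical image of the set `N(G)` of normal words
(mod `G`) in `R⟨X⟩/I` is a free `R`-basis of the `R`-module `R⟨X⟩/I`. -/
theorem normal_words_basis_of_quotient {R : Type} [CommRing R] {n : ℕ}
    (o : MonomialOrdering n) (G : Set (FreeAlg R n)) (I : TwoSidedIdeal (FreeAlg R n))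
    (hgen : I = TwoSidedIdeal.span G) (hGB : IsMonicGB o G I) :
    ∃ b : Module.Basis (NSet o G) R (FreeAlg R n ⧸ tsiSubmodule I),
      ∀ u : NSet o G, b u = Submodule.Quotient.mk (mono R u.1) := by
  classical
  set p := tsiSubmodule I with hp
  set v : NSet o G → FreeAlg R n := fun u => mono R u.1 with hv
  have hrange : Set.range v = mono R '' NSet o G := by
    rw [show v = (mono R) ∘ Subtype.val from rfl, Set.range_comp, Subtype.range_coe]
  have hli0 : LinearIndependent R v := by
    have h1 : LinearIndependent R (fun u : Word n => (MonoidAlgebra.single u (1 : R) : FreeAlg R n)) := by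
      have := ((Finsupp.basisSingleOne (ι := Word n) (R := R)).map
        (MonoidAlgebra.coeffLinearEquiv R).symm).linearIndependent
      exact this
    exact h1.comp Subtype.val Subtype.coe_injective
  have hdisj : Disjoint (Submodule.span R (Set.range v)) (LinearMap.ker p.mkQ) := by
    rw [Submodule.ker_mkQ, Submodule.disjoint_def]
    intro x hx hxp
    refine normal_mem_eq_zero o hGB (show x ∈ I from hxp) ?_
    rw [hrange] at hx
    exact normal_of_mem_span o hx
  have hli : LinearIndependent R (⇑p.mkQ ∘ v) := hli0.map hdisj
  have hspan : ⊤ ≤ Submodule.span R (Set.range (⇑p.mkQ ∘ v)) := by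
    intro x _
    obtain ⟨f, rfl⟩ := p.mkQ_surjective x
    obtain ⟨s, hs, i, hi, rfl⟩ := Submodule.mem_sup.mp (mem_span_sup o hGB f)
    have heq : p.mkQ (s + i) = p.mkQ s := by
      rw [map_add, Submodule.mkQ_apply, Submodule.mkQ_apply,
        (Submodule.Quotient.mk_eq_zero p).mpr hi, add_zero]
    rw [heq]
    have hs' : s ∈ Submodule.span R (Set.range v) := by rwa [hrange]
    have : p.mkQ s ∈ Submodule.map p.mkQ (Submodule.span R (Set.range v)) :=
      Submodule.mem_map_of_mem hs'
    rwa [Submodule.map_span, ← Set.range_comp] at this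
  refine ⟨Module.Basis.mk hli hspan, fun u => ?_⟩
  rw [Module.Basis.mk_apply]
  rfl
end

section
/- Let R be a commutative ring, ≺ a fixed monomial ordering on B_R, and G an LM-reduced monic subset of the free R-algebra R⟨X⟩ = R⟨X₁,...,Xₙ⟩. Then G is an LM-reduced monic Gröbner basis of the ideal I = ⟨G⟩ if and only if for each pair g_i, g_j ∈ G (including g_i = g_j), every overlap element o(g_i,u; v,g_j) is reduced to zero by division by G, i.e. o(g_i,u; v,g_j) has a Gröbner representation Σ λ s g w with λ ∈ R, s,w ∈ B_R, g ∈ G and LM(s g w) ⪯ LM(o(g_i,u; v,g_j)) whenever λ ≠ 0. -/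
open scoped Classical

namespace TT

variable {R : Type} [CommRing R] {n : ℕ} (o : MonomialOrdering n)

/-! ### Order basics -/

lemma lt_irrefl (a : Word n) : ¬ o.lt a a := by
  haveI := o.strictTotal; exact irrefl_of o.lt a

lemma lt_trans {a b c : Word n} (h1 : o.lt a b) (h2 : o.lt b c) : o.lt a c := by
  haveI := o.strictTotal; exact trans_of o.lt h1 h2

lemma lt_trichotomy (a b : Word n) : o.lt a b ∨ a = b ∨ o.lt b a := by
  haveI := o.strictTotal; exact trichotomous_of o.lt a b

lemma le_refl (a : Word n) : o.le a a := Or.inl rfl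

lemma le_of_lt {a b : Word n} (h : o.lt a b) : o.le a b := Or.inr h

lemma lt_of_le_of_lt {a b c : Word n} (h1 : o.le a b) (h2 : o.lt b c) : o.lt a c := by
  rcases h1 with rfl | h1
  · exact h2
  · exact lt_trans o h1 h2

lemma lt_of_lt_of_le {a b c : Word n} (h1 : o.lt a b) (h2 : o.le b c) : o.lt a c := by
  rcases h2 with rfl | h2
  · exact h1
  · exact lt_trans o h1 h2

lemma le_trans {a b c : Word n} (h1 : o.le a b) (h2 : o.le b c) : o.le a c := by
  rcases h1 with rfl | h1
  · exact h2
  · exact le_of_lt o (lt_of_lt_of_le o h1 h2)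

lemma not_lt_of_le {a b : Word n} (h : o.le a b) : ¬ o.lt b a := fun hba =>
  lt_irrefl o a (lt_of_le_of_lt o h hba)

lemma le_of_not_lt {a b : Word n} (h : ¬ o.lt a b) : o.le b a := by
  rcases lt_trichotomy o a b with h1 | rfl | h1
  · exact absurd h1 h
  · exact le_refl o a
  · exact le_of_lt o h1

lemma le_antisymm {a b : Word n} (h1 : o.le a b) (h2 : o.le b a) : a = b := by
  rcases h1 with rfl | h1
  · rfl
  · exact absurd h1 (not_lt_of_le o h2)

lemma lt_of_le_of_ne {a b : Word n} (h1 : o.le a b) (h2 : a ≠ b) : o.lt a b := by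
  rcases h1 with rfl | h1
  · exact absurd rfl h2
  · exact h1

lemma le_mul_compat {u v : Word n} (w s : Word n) (h : o.le u v) :
    o.le (w * u * s) (w * v * s) := by
  rcases h with rfl | h
  · exact le_refl o _
  · exact le_of_lt o (o.mul_compat w u v s h)

lemma lt_mul_left {u v : Word n} (w : Word n) (h : o.lt u v) : o.lt (w * u) (w * v) := by
  simpa using o.mul_compat w u v 1 h

lemma lt_mul_right {u v : Word n} (s : Word n) (h : o.lt u v) : o.lt (u * s) (v * s) := by
  simpa using o.mul_compat 1 u v s h

lemma le_mul_left {u v : Word n} (w : Word n) (h : o.le u v) : o.le (w * u) (w * v) := by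
  simpa using le_mul_compat o w 1 h

lemma le_mul_right {u v : Word n} (s : Word n) (h : o.le u v) : o.le (u * s) (v * s) := by
  simpa using le_mul_compat o 1 s h

/-- Every nonempty finite set of words has a `≺`-greatest element. -/
lemma exists_max (s : Finset (Word n)) (hs : s.Nonempty) :
    ∃ w ∈ s, ∀ u ∈ s, o.le u w := by
  classical
  induction s using Finset.induction_on with
  | empty => exact absurd hs (by simp)
  | @insert a t ha ih =>
    rcases t.eq_empty_or_nonempty with rfl | ht
    · exact ⟨a, by simp, by simp [le_refl]⟩
    · obtain ⟨w, hw, hmax⟩ := ih ht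
      by_cases h : o.lt a w
      · exact ⟨w, Finset.mem_insert_of_mem hw, fun u hu => by
          rcases Finset.mem_insert.1 hu with rfl | hu
          · exact le_of_lt o h
          · exact hmax u hu⟩
      · exact ⟨a, Finset.mem_insert_self _ _, fun u hu => by
          rcases Finset.mem_insert.1 hu with rfl | hu
          · exact le_refl o _
          · exact le_trans o (hmax u hu) (le_of_not_lt o h)⟩

/-! ### LM basics -/

lemma lm_spec {f : FreeAlg R n} (hf : f ≠ 0) :
    LM o f ∈ f.coeff.support ∧ ∀ u ∈ f.coeff.support, o.le u (LM o f) := by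
  have hs : f.coeff.support.Nonempty := Finsupp.support_nonempty_iff.2 (mt MonoidAlgebra.coeff_eq_zero.1 hf)
  obtain ⟨w, hw, hmax⟩ := exists_max o _ hs
  have h : ∃ w, w ∈ f.coeff.support ∧ ∀ u ∈ f.coeff.support, o.le u w := ⟨w, hw, hmax⟩
  rw [LM, dif_pos h]
  exact h.choose_spec

lemma lm_mem {f : FreeAlg R n} (hf : f ≠ 0) : LM o f ∈ f.coeff.support := (lm_spec o hf).1

lemma le_lm {f : FreeAlg R n} {u : Word n} (hu : u ∈ f.coeff.support) : o.le u (LM o f) := by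
  have hf : f ≠ 0 := by
    intro h; rw [h] at hu; simp at hu
  exact (lm_spec o hf).2 u hu

lemma lc_ne_zero {f : FreeAlg R n} (hf : f ≠ 0) : LC o f ≠ 0 :=
  Finsupp.mem_support_iff.1 (lm_mem o hf)

lemma lm_eq_of {f : FreeAlg R n} {w : Word n} (hw : w ∈ f.coeff.support)
    (hmax : ∀ u ∈ f.coeff.support, o.le u w) : LM o f = w := by
  have hf : f ≠ 0 := by
    intro h; rw [h] at hw; simp at hw
  exact le_antisymm o (hmax _ (lm_mem o hf)) (le_lm o hw)

end TT
namespace TT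

variable {R : Type} [CommRing R] {n : ℕ} (o : MonomialOrdering n)

/-! ### monomial sandwich lemmas -/

lemma sandwich_inj (u v : Word n) : Function.Injective (fun w : Word n => u * w * v) := by
  intro a b h
  exact mul_left_cancel (mul_right_cancel h)

lemma sandwich_eq (u v : Word n) (f : FreeAlg R n) :
    mono R u * f * mono R v = MonoidAlgebra.mapDomain (fun w => u * w * v) f := by
  induction f using MonoidAlgebra.induction with
  | zero => simp
  | single_add a b f haf hb ih =>
    rw [MonoidAlgebra.mapDomain_add, MonoidAlgebra.mapDomain_single, mul_add, add_mul, ih]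
    congr 1
    show mono R u * MonoidAlgebra.single a b * mono R v = _
    rw [mono, mono, MonoidAlgebra.single_mul_single, MonoidAlgebra.single_mul_single]
    simp

lemma sandwich_apply (u v w : Word n) (f : FreeAlg R n) :
    (mono R u * f * mono R v).coeff (u * w * v) = f.coeff w := by
  rw [sandwich_eq]
  exact Finsupp.mapDomain_apply (sandwich_inj u v) f.coeff w

lemma support_sandwich {u v x : Word n} {f : FreeAlg R n}
    (hx : x ∈ (mono R u * f * mono R v).coeff.support) : ∃ w ∈ f.coeff.support, x = u * w * v := by
  rw [sandwich_eq] at hx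
  have hx : x ∈ (Finsupp.mapDomain (fun w => u * w * v) f.coeff).support := hx
  have := Finsupp.mapDomain_support hx
  obtain ⟨w, hw, rfl⟩ := Finset.mem_image.1 this
  exact ⟨w, hw, rfl⟩

lemma lm_sandwich {f : FreeAlg R n} (hf : f ≠ 0) (u v : Word n) :
    LM o (mono R u * f * mono R v) = u * LM o f * v := by
  apply lm_eq_of
  · rw [Finsupp.mem_support_iff, sandwich_apply]
    exact lc_ne_zero o hf
  · intro x hx
    obtain ⟨w, hw, rfl⟩ := support_sandwich hx
    exact le_mul_compat o u v (le_lm o hw)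

lemma lc_sandwich {f : FreeAlg R n} (hf : f ≠ 0) (u v : Word n) :
    LC o (mono R u * f * mono R v) = LC o f := by
  rw [LC, lm_sandwich o hf, sandwich_apply]
  rfl

lemma sandwich_ne_zero {f : FreeAlg R n} (hf : f ≠ 0) (u v : Word n) :
    mono R u * f * mono R v ≠ 0 := by
  rw [sandwich_eq]
  intro h
  exact hf (MonoidAlgebra.mapDomain_injective (sandwich_inj u v) (by simpa using h))

lemma le_of_mem_support_sandwich {u v x : Word n} {f : FreeAlg R n}
    (hx : x ∈ (mono R u * f * mono R v).coeff.support) : o.le x (u * LM o f * v) := by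
  obtain ⟨w, hw, rfl⟩ := support_sandwich hx
  exact le_mul_compat o u v (le_lm o hw)

/-- Expand a product `x * f * y` as a sum over the support of the middle factor. -/
lemma expand (x y f : FreeAlg R n) :
    x * f * y = ∑ w ∈ f.coeff.support, f.coeff w • (x * mono R w * y) := by
  conv_lhs => rw [← MonoidAlgebra.sum_coeff_single f]
  rw [Finsupp.sum, Finset.mul_sum, Finset.sum_mul]
  apply Finset.sum_congr rfl
  intro w _
  rw [show MonoidAlgebra.single w (f.coeff w) = f.coeff w • mono R w from by
    rw [mono, MonoidAlgebra.smul_single, smul_eq_mul, mul_one]]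
  rw [mul_smul_comm, smul_mul_assoc]

lemma mem_support_sum {ι : Type*} {s : Finset ι} {F : ι → FreeAlg R n} {x : Word n}
    (hx : x ∈ (∑ i ∈ s, F i).coeff.support) : ∃ i ∈ s, x ∈ (F i).coeff.support := by
  by_contra h
  push_neg at h
  apply Finsupp.mem_support_iff.1 hx
  rw [MonoidAlgebra.coeff_sum, Finsupp.finset_sum_apply]
  exact Finset.sum_eq_zero fun i hi => Finsupp.notMem_support_iff.1 (h i hi)

lemma mem_support_sub {a b : FreeAlg R n} {x : Word n}
    (hx : x ∈ (a - b).coeff.support) : x ∈ a.coeff.support ∨ x ∈ b.coeff.support := by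
  by_contra h
  push_neg at h
  apply Finsupp.mem_support_iff.1 hx
  rw [MonoidAlgebra.coeff_sub, Finsupp.sub_apply, Finsupp.notMem_support_iff.1 h.1, Finsupp.notMem_support_iff.1 h.2,
    sub_zero]

end TT
namespace TT

variable {R : Type} [CommRing R] {n : ℕ} (o : MonomialOrdering n)

/-- A representation `f = Σ λᵢ uᵢ gᵢ vᵢ` with `gᵢ ∈ G` and all "potential leading words"
`uᵢ · LM(gᵢ) · vᵢ` (for `λᵢ ≠ 0`) satisfying the predicate `P`. -/
def RepP (G : Set (FreeAlg R n)) (P : Word n → Prop) (f : FreeAlg R n) : Prop :=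
  ∃ (m : ℕ) (lam : Fin m → R) (u v : Fin m → Word n) (g : Fin m → FreeAlg R n),
    (∀ i, g i ∈ G) ∧
    f = ∑ i, lam i • (mono R (u i) * g i * mono R (v i)) ∧
    ∀ i, lam i ≠ 0 → P (u i * LM o (g i) * v i)

variable {o} {G : Set (FreeAlg R n)} {P Q : Word n → Prop}

lemma repP_zero : RepP o G P 0 :=
  ⟨0, Fin.elim0, Fin.elim0, Fin.elim0, Fin.elim0, fun i => i.elim0, by simp, fun i => i.elim0⟩

lemma repP_single {g : FreeAlg R n} (hg : g ∈ G) {u v : Word n} (hP : P (u * LM o g * v)) :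
    RepP o G P (mono R u * g * mono R v) :=
  ⟨1, fun _ => 1, fun _ => u, fun _ => v, fun _ => g, fun _ => hg, by simp, fun _ _ => hP⟩

lemma repP_smul {f : FreeAlg R n} (c : R) (h : RepP o G P f) : RepP o G P (c • f) := by
  obtain ⟨m, lam, u, v, g, hg, hf, hP⟩ := h
  refine ⟨m, fun i => c * lam i, u, v, g, hg, ?_, ?_⟩
  · rw [hf, Finset.smul_sum]
    exact Finset.sum_congr rfl fun i _ => by rw [smul_smul]
  · intro i hi
    apply hP
    intro h0
    apply hi
    show c * lam i = 0
    rw [h0, mul_zero]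

lemma repP_add {f₁ f₂ : FreeAlg R n} (h₁ : RepP o G P f₁) (h₂ : RepP o G P f₂) :
    RepP o G P (f₁ + f₂) := by
  obtain ⟨m₁, lam₁, u₁, v₁, g₁, hg₁, hf₁, hP₁⟩ := h₁
  obtain ⟨m₂, lam₂, u₂, v₂, g₂, hg₂, hf₂, hP₂⟩ := h₂
  refine ⟨m₁ + m₂, Fin.addCases lam₁ lam₂, Fin.addCases u₁ u₂, Fin.addCases v₁ v₂,
    Fin.addCases g₁ g₂, fun i => ?_, ?_, fun i => ?_⟩
  · refine Fin.addCases (fun i => ?_) (fun i => ?_) i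
    · simpa using hg₁ i
    · simpa using hg₂ i
  · rw [Fin.sum_univ_add, hf₁, hf₂]
    congr 1 <;> exact Finset.sum_congr rfl fun i _ => by simp
  · refine Fin.addCases (fun i => ?_) (fun i => ?_) i
    · intro hi
      simp only [Fin.addCases_left] at hi ⊢
      exact hP₁ i hi
    · intro hi
      simp only [Fin.addCases_right] at hi ⊢
      exact hP₂ i hi

lemma repP_neg {f : FreeAlg R n} (h : RepP o G P f) : RepP o G P (-f) := by
  simpa using repP_smul (-1) h

lemma repP_sub {f₁ f₂ : FreeAlg R n} (h₁ : RepP o G P f₁) (h₂ : RepP o G P f₂) :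
    RepP o G P (f₁ - f₂) := by
  rw [sub_eq_add_neg]; exact repP_add h₁ (repP_neg h₂)

lemma repP_mono (hPQ : ∀ w, P w → Q w) {f : FreeAlg R n} (h : RepP o G P f) : RepP o G Q f := by
  obtain ⟨m, lam, u, v, g, hg, hf, hP⟩ := h
  exact ⟨m, lam, u, v, g, hg, hf, fun i hi => hPQ _ (hP i hi)⟩

lemma repP_sum {ι : Type*} (s : Finset ι) (F : ι → FreeAlg R n)
    (h : ∀ i ∈ s, RepP o G P (F i)) : RepP o G P (∑ i ∈ s, F i) := by
  classical
  induction s using Finset.induction_on with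
  | empty => simpa using repP_zero
  | @insert a t ha ih =>
    rw [Finset.sum_insert ha]
    exact repP_add (h a (t.mem_insert_self a)) (ih fun i hi => h i (Finset.mem_insert_of_mem hi))

lemma repP_mul_mono_left (a : Word n) (hPQ : ∀ w, P w → Q (a * w)) {f : FreeAlg R n}
    (h : RepP o G P f) : RepP o G Q (mono R a * f) := by
  obtain ⟨m, lam, u, v, g, hg, hf, hP⟩ := h
  refine ⟨m, lam, fun i => a * u i, v, g, hg, ?_, fun i hi => ?_⟩
  · rw [hf, Finset.mul_sum]
    refine Finset.sum_congr rfl fun i _ => ?_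
    rw [mul_smul_comm]
    congr 1
    rw [show mono R (a * u i) = mono R a * mono R (u i) from
      by rw [mono, mono, mono, MonoidAlgebra.single_mul_single, one_mul]]
    noncomm_ring
  · have := hPQ _ (hP i hi)
    rwa [show a * (u i * LM o (g i) * v i) = a * u i * LM o (g i) * v i from by
      rw [mul_assoc, mul_assoc, mul_assoc]] at this

lemma repP_mul_mono_right (b : Word n) (hPQ : ∀ w, P w → Q (w * b)) {f : FreeAlg R n}
    (h : RepP o G P f) : RepP o G Q (f * mono R b) := by
  obtain ⟨m, lam, u, v, g, hg, hf, hP⟩ := h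
  refine ⟨m, lam, u, fun i => v i * b, g, hg, ?_, fun i hi => ?_⟩
  · rw [hf, Finset.sum_mul]
    refine Finset.sum_congr rfl fun i _ => ?_
    rw [smul_mul_assoc]
    congr 1
    rw [show mono R (v i * b) = mono R (v i) * mono R b from
      by rw [mono, mono, mono, MonoidAlgebra.single_mul_single, one_mul]]
    noncomm_ring
  · have := hPQ _ (hP i hi)
    rwa [show u i * LM o (g i) * v i * b = u i * LM o (g i) * (v i * b) from by
      rw [mul_assoc]] at this

end TT
namespace TT

variable {R : Type} [CommRing R] {n : ℕ} {o : MonomialOrdering n} {G : Set (FreeAlg R n)}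

lemma mono_mul (a b : Word n) : mono R (a * b) = mono R a * mono R b := by
  rw [mono, mono, mono, MonoidAlgebra.single_mul_single, one_mul]

lemma mono_one : mono R (1 : Word n) = 1 := MonoidAlgebra.one_def.symm

/-- Any element with a `RepP` representation lies in the span of `G`. -/
lemma repP_mem_span {P : Word n → Prop} {f : FreeAlg R n} (h : RepP o G P f) :
    f ∈ TwoSidedIdeal.span G := by
  obtain ⟨m, lam, u, v, g, hg, hf, -⟩ := h
  rw [hf]
  have : ∀ i : Fin m, lam i • (mono R (u i) * g i * mono R (v i)) ∈ TwoSidedIdeal.span G := by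
    intro i
    have h1 : g i ∈ TwoSidedIdeal.span G := TwoSidedIdeal.subset_span (hg i)
    have h2 : mono R (u i) * g i * mono R (v i) ∈ TwoSidedIdeal.span G :=
      TwoSidedIdeal.mul_mem_right _ _ _ (TwoSidedIdeal.mul_mem_left _ _ _ h1)
    rw [Algebra.smul_def]
    exact TwoSidedIdeal.mul_mem_left _ _ _ h2
  classical
  refine Finset.sum_induction _ _ (fun a b ha hb => TwoSidedIdeal.add_mem _ ha hb)
    (TwoSidedIdeal.zero_mem _) fun i _ => this i

/-- Bounded representation: `f = Σ λᵢ uᵢ gᵢ vᵢ` with all tops `⪯ W` for some `W`. -/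
def RepBdd (o : MonomialOrdering n) (G : Set (FreeAlg R n)) (f : FreeAlg R n) : Prop :=
  ∃ W : Word n, RepP o G (fun w => o.le w W) f

lemma repBdd_zero : RepBdd o G (0 : FreeAlg R n) := ⟨1, repP_zero⟩

lemma repBdd_add {f₁ f₂ : FreeAlg R n} (h₁ : RepBdd o G f₁) (h₂ : RepBdd o G f₂) :
    RepBdd o G (f₁ + f₂) := by
  obtain ⟨W₁, h₁⟩ := h₁
  obtain ⟨W₂, h₂⟩ := h₂
  by_cases h : o.lt W₁ W₂
  · exact ⟨W₂, repP_add (repP_mono (fun w hw => le_trans o hw (le_of_lt o h)) h₁) h₂⟩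
  · exact ⟨W₁, repP_add h₁ (repP_mono (fun w hw => le_trans o hw (le_of_not_lt o h)) h₂)⟩

lemma repBdd_neg {f : FreeAlg R n} (h : RepBdd o G f) : RepBdd o G (-f) := by
  obtain ⟨W, h⟩ := h
  exact ⟨W, repP_neg h⟩

lemma repBdd_smul {f : FreeAlg R n} (c : R) (h : RepBdd o G f) : RepBdd o G (c • f) := by
  obtain ⟨W, h⟩ := h
  exact ⟨W, repP_smul c h⟩

lemma repBdd_mul_left (x : FreeAlg R n) {f : FreeAlg R n} (h : RepBdd o G f) :
    RepBdd o G (x * f) := by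
  induction x using MonoidAlgebra.induction_on with
  | of a =>
    obtain ⟨W, h⟩ := h
    have : (MonoidAlgebra.of R (Word n)) a = mono R a := rfl
    rw [this]
    exact ⟨a * W, repP_mul_mono_left (Q := fun w => o.le w (a * W)) a
      (fun w hw => le_mul_left o a hw) h⟩
  | add x y hx hy => rw [add_mul]; exact repBdd_add hx hy
  | smul r x hx => rw [smul_mul_assoc]; exact repBdd_smul r hx

lemma repBdd_mul_right (y : FreeAlg R n) {f : FreeAlg R n} (h : RepBdd o G f) :
    RepBdd o G (f * y) := by
  induction y using MonoidAlgebra.induction_on with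
  | of a =>
    obtain ⟨W, h⟩ := h
    have : (MonoidAlgebra.of R (Word n)) a = mono R a := rfl
    rw [this]
    exact ⟨W * a, repP_mul_mono_right (Q := fun w => o.le w (W * a)) a
      (fun w hw => le_mul_right o a hw) h⟩
  | add x y hx hy => rw [mul_add]; exact repBdd_add hx hy
  | smul r x hx => rw [mul_smul_comm]; exact repBdd_smul r hx

lemma mem_span_repBdd {f : FreeAlg R n} (hf : f ∈ TwoSidedIdeal.span G) : RepBdd o G f := by
  let I : TwoSidedIdeal (FreeAlg R n) := TwoSidedIdeal.mk' (setOf (RepBdd o G))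
    repBdd_zero (fun ha hb => repBdd_add ha hb) (fun ha => repBdd_neg ha)
    (fun {x y} hy => repBdd_mul_left x hy) (fun {x y} hx => repBdd_mul_right y hx)
  have hGI : G ⊆ I := by
    intro g hg
    show g ∈ I
    refine (TwoSidedIdeal.mem_mk' _ _ _ _ _ _ _).2 ?_
    have heq : mono R (1 : Word n) * g * mono R (1 : Word n) = g := by
      rw [mono_one, one_mul, mul_one]
    have h1 : RepP o G (fun w => o.le w (LM o g)) (mono R (1 : Word n) * g * mono R 1) :=
      repP_single hg (by rw [one_mul, mul_one]; exact le_refl o _)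
    rw [heq] at h1
    exact ⟨LM o g, h1⟩
  have := TwoSidedIdeal.mem_span_iff.1 hf I hGI
  exact (TwoSidedIdeal.mem_mk' (setOf (RepBdd o G)) _ _ _ _ _ f).1 this

/-- Conversion between `HasGroebnerRep` and `RepP` bounded by `LM f`. -/
lemma hasGroebnerRep_iff_repP (hmonic : IsMonicSet o G) (f : FreeAlg R n) :
    HasGroebnerRep o G f ↔ RepP o G (fun w => o.le w (LM o f)) f := by
  constructor
  · rintro ⟨m, lam, u, v, g, hg, hf, hle⟩
    refine ⟨m, lam, u, v, g, hg, hf, fun i hi => ?_⟩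
    have := hle i hi
    rwa [lm_sandwich o (hmonic _ (hg i)).1] at this
  · rintro ⟨m, lam, u, v, g, hg, hf, hle⟩
    refine ⟨m, lam, u, v, g, hg, hf, fun i hi => ?_⟩
    rw [lm_sandwich o (hmonic _ (hg i)).1]
    exact hle i hi

end TT
namespace TT

variable {R : Type} [CommRing R] {n : ℕ} {o : MonomialOrdering n} {G : Set (FreeAlg R n)}

/-- Division algorithm: if `G` is a Gröbner basis then every member of the span has a
representation bounded by its own leading monomial. -/
lemma div_rep (hmonic : IsMonicSet o G)
    (hGB : ∀ f : FreeAlg R n, f ∈ TwoSidedIdeal.span G → f ≠ 0 →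
      ∃ g ∈ G, WordDvd (LM o g) (LM o f)) :
    ∀ f : FreeAlg R n, f ∈ TwoSidedIdeal.span G →
      f = 0 ∨ RepP o G (fun w => o.le w (LM o f)) f := by
  have main : ∀ w : Word n, ∀ f : FreeAlg R n, f ∈ TwoSidedIdeal.span G → LM o f = w →
      f = 0 ∨ RepP o G (fun x => o.le x (LM o f)) f := by
    intro w
    induction w using o.wellFounded.induction with
    | _ w ih =>
      intro f hf hLM
      by_cases hf0 : f = 0
      · exact Or.inl hf0
      right
      obtain ⟨g, hgG, w₁, w₂, hdvd⟩ := hGB f hf hf0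
      have hgne : g ≠ 0 := (hmonic g hgG).1
      have hglc : LC o g = 1 := (hmonic g hgG).2
      set t : FreeAlg R n := LC o f • (mono R w₁ * g * mono R w₂) with ht
      have htapp : (mono R w₁ * g * mono R w₂).coeff (LM o f) = 1 := by
        conv_lhs => rw [hdvd]
        rw [sandwich_apply]
        exact hglc
      have htrep : RepP o G (fun x => o.le x (LM o f)) t :=
        repP_smul _ (repP_single hgG (by rw [← hdvd]; exact le_refl o _))
      have htmem : t ∈ TwoSidedIdeal.span G := repP_mem_span htrep
      by_cases hft : f - t = 0
      · have hfe : f = t := sub_eq_zero.mp hft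
        rw [← hfe] at htrep
        exact htrep
      · have hlt : ∀ x ∈ (f - t).coeff.support, o.lt x (LM o f) := by
          intro x hx
          have hne : x ≠ LM o f := by
            intro hxe
            apply Finsupp.mem_support_iff.1 hx
            rw [hxe, MonoidAlgebra.coeff_sub, Finsupp.sub_apply, ht, MonoidAlgebra.coeff_smul_apply, htapp, smul_eq_mul, mul_one]
            show LC o f - LC o f = 0
            exact sub_self _
          have hle : o.le x (LM o f) := by
            rcases mem_support_sub hx with h | h
            · exact le_lm o h
            · have hsub : t.coeff.support ⊆ (mono R w₁ * g * mono R w₂).coeff.support :=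
                by rw [ht, MonoidAlgebra.coeff_smul]; exact Finsupp.support_smul
              have := le_of_mem_support_sandwich (o := o) (hsub h)
              rwa [← hdvd] at this
          exact lt_of_le_of_ne o hle hne
        have hLMlt : o.lt (LM o (f - t)) w := by
          rw [← hLM]
          exact hlt _ (lm_mem o hft)
        have hmem : f - t ∈ TwoSidedIdeal.span G := TwoSidedIdeal.sub_mem _ hf htmem
        rcases ih (LM o (f - t)) hLMlt (f - t) hmem rfl with h0 | hrep
        · exact absurd h0 hft
        · have hrep' : RepP o G (fun x => o.le x (LM o f)) (f - t) :=
            repP_mono (fun x hx => le_trans o hx (le_of_lt o (by rw [hLM]; exact hLMlt))) hrep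
          have := repP_add hrep' htrep
          rwa [sub_add_cancel] at this
  intro f hf
  exact main (LM o f) f hf rfl

/-- The forward direction of the termination theorem. -/
lemma forward_dir (hmonic : IsMonicSet o G)
    (hGB : IsMonicGB o G (TwoSidedIdeal.span G)) :
    ∀ gi ∈ G, ∀ gj ∈ G, ∀ u v : Word n,
      LM o gi * u = v * LM o gj → ¬ WordDvd (LM o gi) v → ¬ WordDvd (LM o gj) u →
        (gi * mono R u - mono R v * gj = 0 ∨
          HasGroebnerRep o G (gi * mono R u - mono R v * gj)) := by
  intro gi hgi gj hgj u v _ _ _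
  have h1 : gi * mono R u ∈ TwoSidedIdeal.span G :=
    TwoSidedIdeal.mul_mem_right _ _ _ (TwoSidedIdeal.subset_span hgi)
  have h2 : mono R v * gj ∈ TwoSidedIdeal.span G :=
    TwoSidedIdeal.mul_mem_left _ _ _ (TwoSidedIdeal.subset_span hgj)
  have hmem : gi * mono R u - mono R v * gj ∈ TwoSidedIdeal.span G :=
    TwoSidedIdeal.sub_mem _ h1 h2
  rcases div_rep hmonic hGB.2.2 _ hmem with h0 | hrep
  · exact Or.inl h0
  · exact Or.inr ((hasGroebnerRep_iff_repP hmonic _).2 hrep)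

end TT
namespace TT

variable {n : ℕ}

lemma toList_inj {a b : Word n} (h : FreeMonoid.toList a = FreeMonoid.toList b) : a = b :=
  FreeMonoid.toList.injective h

lemma wordDvd_length {p a : Word n} (h : WordDvd p a) : p.length ≤ a.length := by
  obtain ⟨w, s, rfl⟩ := h
  rw [FreeMonoid.length_mul, FreeMonoid.length_mul]
  omega

lemma not_wordDvd_of_length {p a : Word n} (h : a.length < p.length) : ¬ WordDvd p a :=
  fun hd => absurd (wordDvd_length hd) (by omega)

lemma list_split {α : Type*} {a b c d : List α} (h : a ++ b = c ++ d)
    (hle : a.length ≤ c.length) : ∃ e, c = a ++ e ∧ b = e ++ d := by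
  rcases List.append_eq_append_iff.1 h with ⟨e, he1, he2⟩ | ⟨e, he1, he2⟩
  · exact ⟨e, he1, he2⟩
  · have hlen : e.length = 0 := by
      have := congrArg List.length he1
      simp only [List.length_append] at this
      omega
    rw [List.length_eq_zero_iff] at hlen
    subst hlen
    rw [List.append_nil] at he1
    subst he1
    exact ⟨[], by simp, by simpa using he2.symm⟩

lemma word_split2 {a b c d : Word n} (h : a * b = c * d) (hle : a.length ≤ c.length) :
    ∃ e : Word n, c = a * e ∧ b = e * d := by
  have h' : FreeMonoid.toList a ++ FreeMonoid.toList b =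
      FreeMonoid.toList c ++ FreeMonoid.toList d := by
    rw [← FreeMonoid.toList_mul, ← FreeMonoid.toList_mul, h]
  obtain ⟨e, h1, h2⟩ := list_split h' hle
  refine ⟨FreeMonoid.ofList e, toList_inj ?_, toList_inj ?_⟩
  · rw [FreeMonoid.toList_mul, h1]; rfl
  · rw [FreeMonoid.toList_mul, h2]; rfl

lemma word_length_mul (a b : Word n) : (a * b).length = a.length + b.length :=
  FreeMonoid.length_mul a b

/-- Case analysis for two "occurrences" `u·p·v = u'·p'·v'` of subwords `p, p'` in the
same word, with the `p`-occurrence starting no later: they are disjoint, or `p'` occurs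
inside `p`, or they properly overlap. -/
lemma overlap_cases {u p v u' p' v' : Word n} (h : u * p * v = u' * p' * v')
    (hle : u.length ≤ u'.length) :
    (∃ m, u' = u * p * m ∧ v = m * p' * v') ∨
    (∃ a c, u' = u * a ∧ p = a * p' * c ∧ v' = c * v) ∨
    (∃ a b, u' = u * a ∧ v = b * v' ∧ p * b = a * p' ∧
      a.length < p.length ∧ b.length < p'.length) := by
  have h0 : u * (p * v) = u' * (p' * v') := by
    rw [← mul_assoc, ← mul_assoc, h]
  obtain ⟨A, hA1, hA2⟩ := word_split2 h0 hle
  by_cases hc1 : p.length ≤ A.length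
  · obtain ⟨m, hm1, hm2⟩ := word_split2 hA2 hc1
    exact Or.inl ⟨m, by rw [hA1, hm1, mul_assoc], by rw [hm2, mul_assoc]⟩
  · by_cases hc2 : A.length + p'.length ≤ p.length
    · have heq : (A * p') * v' = p * v := by rw [mul_assoc, ← hA2]
      obtain ⟨c, hc1', hc2'⟩ := word_split2 heq (by rw [word_length_mul]; omega)
      exact Or.inr (Or.inl ⟨A, c, hA1, by rw [hc1', mul_assoc], hc2'⟩)
    · have heq : p * v = (A * p') * v' := by rw [mul_assoc, ← hA2]
      obtain ⟨b, hb1, hb2⟩ := word_split2 heq (by rw [word_length_mul]; omega)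
      have hblen : b.length < p'.length := by
        have := congrArg FreeMonoid.length hb1
        rw [word_length_mul, word_length_mul] at this
        omega
      exact Or.inr (Or.inr ⟨A, b, hA1, hb2, hb1.symm, by omega, hblen⟩)

end TT
namespace TT

variable {R : Type} [CommRing R] {n : ℕ} {o : MonomialOrdering n} {G : Set (FreeAlg R n)}

lemma mono_apply_self (w : Word n) : (mono R w).coeff w = 1 := by
  simp [mono, MonoidAlgebra.coeff_single]

lemma mem_support_mono {w x : Word n} (hx : x ∈ (mono R w : FreeAlg R n).coeff.support) : x = w := by
  rw [mono, MonoidAlgebra.coeff_single] at hx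
  have := Finsupp.support_single_subset hx
  simpa using this

/-- The lower part of a monic polynomial: all its words are strictly below the leading one. -/
lemma lower_support {g : FreeAlg R n} (hlc : LC o g = 1) :
    ∀ x ∈ (g - mono R (LM o g)).coeff.support, o.lt x (LM o g) := by
  intro x hx
  have hne : x ≠ LM o g := by
    intro he
    apply Finsupp.mem_support_iff.1 hx
    rw [he, MonoidAlgebra.coeff_sub, Finsupp.sub_apply, mono_apply_self]
    show LC o g - 1 = 0
    rw [hlc, sub_self]
  rcases mem_support_sub hx with h | h
  · exact lt_of_le_of_ne o (le_lm o h) hne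
  · exact absurd (mem_support_mono h) hne

lemma mul_mono_apply (g : FreeAlg R n) (b x : Word n) : (g * mono R b).coeff (x * b) = g.coeff x := by
  have := sandwich_apply (R := R) 1 b x g
  rwa [mono_one, one_mul, one_mul] at this

lemma mono_mul_apply (g : FreeAlg R n) (a x : Word n) : (mono R a * g).coeff (a * x) = g.coeff x := by
  have := sandwich_apply (R := R) a 1 x g
  rwa [mono_one, mul_one, mul_one] at this

lemma mem_support_mul_mono {g : FreeAlg R n} {b x : Word n}
    (hx : x ∈ (g * mono R b).coeff.support) : ∃ y ∈ g.coeff.support, x = y * b := by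
  have : x ∈ (mono R (1 : Word n) * g * mono R b).coeff.support := by rwa [mono_one, one_mul]
  obtain ⟨y, hy, rfl⟩ := support_sandwich this
  exact ⟨y, hy, by rw [one_mul]⟩

lemma mem_support_mono_mul {g : FreeAlg R n} {a x : Word n}
    (hx : x ∈ (mono R a * g).coeff.support) : ∃ y ∈ g.coeff.support, x = a * y := by
  have : x ∈ (mono R a * g * mono R (1 : Word n)).coeff.support := by rwa [mono_one, mul_one]
  obtain ⟨y, hy, rfl⟩ := support_sandwich this
  exact ⟨y, hy, by rw [mul_one]⟩

/-- `x * g * y` has a representation whose tops are sandwiches of `LM g` by support words. -/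
lemma repP_lr {g : FreeAlg R n} (hg : g ∈ G) (x y : FreeAlg R n) :
    RepP o G (fun w => ∃ a ∈ x.coeff.support, ∃ b ∈ y.coeff.support, w = a * LM o g * b) (x * g * y) := by
  have h2 : ∀ a ∈ x.coeff.support, RepP o G
      (fun w => ∃ a ∈ x.coeff.support, ∃ b ∈ y.coeff.support, w = a * LM o g * b) (mono R a * g * y) := by
    intro a ha
    have hy : mono R a * g * y = ∑ b ∈ y.coeff.support, y.coeff b • (mono R a * g * mono R b) := by
      have := expand (mono R a * g) (1 : FreeAlg R n) y
      rw [mul_one] at this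
      rw [this]
      exact Finset.sum_congr rfl fun b _ => by rw [mul_one]
    rw [hy]
    exact repP_sum _ _ fun b hb => repP_smul _ (repP_single hg ⟨a, ha, b, hb, rfl⟩)
  have h1 : x * g * y = ∑ a ∈ x.coeff.support, x.coeff a • (mono R a * g * y) := by
    have h0 := expand (1 : FreeAlg R n) (g * y) x
    rw [one_mul] at h0
    rw [mul_assoc, h0]
    exact Finset.sum_congr rfl fun a _ => by rw [one_mul, ← mul_assoc]
  rw [h1]
  exact repP_sum _ _ fun a ha => repP_smul _ (h2 a ha)

/-- **Key lemma** (with ordering of the two occurrences): if two sandwiches of elements of `G`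
have the same potential leading word `W`, their difference has a representation with all
tops strictly below `W`. -/
lemma key_aux (hmonic : IsMonicSet o G) (hred : LMReduced o G)
    (hov : ∀ gi ∈ G, ∀ gj ∈ G, ∀ u v : Word n,
        LM o gi * u = v * LM o gj → ¬ WordDvd (LM o gi) v → ¬ WordDvd (LM o gj) u →
          (gi * mono R u - mono R v * gj = 0 ∨
            HasGroebnerRep o G (gi * mono R u - mono R v * gj)))
    {g g' : FreeAlg R n} (hg : g ∈ G) (hg' : g' ∈ G) {u v u' v' : Word n}
    (h : u * LM o g * v = u' * LM o g' * v') (hle : u.length ≤ u'.length) :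
    RepP o G (fun w => o.lt w (u * LM o g * v))
      (mono R u * g * mono R v - mono R u' * g' * mono R v') := by
  set p := LM o g with hp
  set p' := LM o g' with hp'
  have hgne : g ≠ 0 := (hmonic g hg).1
  have hglc : LC o g = 1 := (hmonic g hg).2
  have hgne' : g' ≠ 0 := (hmonic g' hg').1
  have hglc' : LC o g' = 1 := (hmonic g' hg').2
  rcases overlap_cases h hle with ⟨m, hu', hv⟩ | ⟨a, c, hu', hpac, hv'⟩ | ⟨a, b, hu', hv, hcomm, hal, hbl⟩
  · -- disjoint case
    set r : FreeAlg R n := g - mono R p with hr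
    set r' : FreeAlg R n := g' - mono R p' with hr'
    have hid : mono R u * g * mono R v - mono R u' * g' * mono R v' =
        (mono R u * r * mono R m) * g' * mono R v' -
          (mono R u * g * mono R m) * r' * mono R v' := by
      rw [hv, hu', mono_mul, mono_mul, mono_mul, mono_mul, hr, hr']
      noncomm_ring
    rw [hid]
    apply repP_sub
    · refine repP_mono ?_ (repP_lr hg' (mono R u * r * mono R m) (mono R v'))
      rintro w ⟨a, ha, b, hb, rfl⟩
      obtain ⟨s, hs, rfl⟩ := support_sandwich ha
      have hsl : o.lt s p := lower_support hglc s hs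
      have hbv : b = v' := mem_support_mono hb
      rw [hbv]
      have := o.mul_compat u s p (m * p' * v') hsl
      rw [hv]
      simp only [mul_assoc] at this ⊢
      exact this
    · have hassoc : (mono R u * g * mono R m) * r' * mono R v' =
          mono R u * g * (mono R m * r' * mono R v') := by noncomm_ring
      rw [hassoc]
      refine repP_mono ?_ (repP_lr hg (mono R u) (mono R m * r' * mono R v'))
      rintro w ⟨a, ha, b, hb, rfl⟩
      have hau : a = u := mem_support_mono ha
      rw [hau]
      obtain ⟨s, hs, rfl⟩ := support_sandwich hb
      have hsl : o.lt s p' := lower_support hglc' s hs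
      have := o.mul_compat (u * p * m) s p' v' hsl
      rw [hv]
      simp only [mul_assoc] at this ⊢
      exact this
  · -- containment case
    by_cases hgg' : g = g'
    · subst hgg'
      have hpp : p = p' := rfl
      have hlen := congrArg FreeMonoid.length hpac
      rw [word_length_mul, word_length_mul, ← hpp] at hlen
      have ha1 : a = 1 := FreeMonoid.length_eq_zero.1 (by omega)
      have hc1 : c = 1 := FreeMonoid.length_eq_zero.1 (by omega)
      subst ha1; subst hc1
      rw [mul_one] at hu'
      rw [one_mul] at hv'
      rw [← hu', hv', sub_self]
      exact repP_zero
    · exact absurd ⟨a, c, hpac⟩ (hred g' hg' g hg (Ne.symm hgg'))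
  · -- overlap case
    have hq := hov g hg g' hg' b a hcomm (not_wordDvd_of_length hal) (not_wordDvd_of_length hbl)
    set q : FreeAlg R n := g * mono R b - mono R a * g' with hqdef
    have hid : mono R u * g * mono R v - mono R u' * g' * mono R v' =
        mono R u * q * mono R v' := by
      rw [hv, hu', mono_mul, mono_mul, hqdef]
      noncomm_ring
    by_cases hq0 : q = 0
    · rw [hid, hq0, mul_zero, zero_mul]
      exact repP_zero
    rcases hq with hq | hq
    · exact absurd hq hq0
    have hqrep : RepP o G (fun w => o.le w (LM o q)) q :=
      (hasGroebnerRep_iff_repP hmonic q).1 hq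
    -- all words of q are strictly below p * b
    have hqlt : ∀ x ∈ q.coeff.support, o.lt x (p * b) := by
      intro x hx
      have hne : x ≠ p * b := by
        intro he
        apply Finsupp.mem_support_iff.1 hx
        rw [he, hqdef, MonoidAlgebra.coeff_sub, Finsupp.sub_apply, mul_mono_apply, hcomm, mono_mul_apply]
        show LC o g - LC o g' = 0
        rw [hglc, hglc', sub_self]
      rcases mem_support_sub hx with hx1 | hx1
      · obtain ⟨y, hy, rfl⟩ := mem_support_mul_mono hx1
        exact lt_of_le_of_ne o (le_mul_right o b (le_lm o hy)) hne
      · obtain ⟨y, hy, rfl⟩ := mem_support_mono_mul hx1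
        refine lt_of_le_of_ne o ?_ hne
        rw [hcomm]
        exact le_mul_left o a (le_lm o hy)
    have hLMq : o.lt (LM o q) (p * b) := hqlt _ (lm_mem o hq0)
    rw [hid]
    have step1 : RepP o G (fun w => o.le w (u * LM o q)) (mono R u * q) :=
      repP_mul_mono_left (Q := fun w => o.le w (u * LM o q)) u
        (fun w hw => le_mul_left o u hw) hqrep
    have step2 : RepP o G (fun w => o.le w (u * LM o q * v')) ((mono R u * q) * mono R v') :=
      repP_mul_mono_right (Q := fun w => o.le w (u * LM o q * v')) v'
        (fun w hw => le_mul_right o v' hw) step1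
    refine repP_mono ?_ step2
    intro w hw
    refine lt_of_le_of_lt o hw ?_
    have := o.mul_compat u (LM o q) (p * b) v' hLMq
    rw [hv]
    simp only [mul_assoc] at this ⊢
    exact this

/-- **Key lemma**: two sandwiches with the same potential leading word `W` differ by an
element representable with all tops strictly below `W`. -/
lemma key_lemma (hmonic : IsMonicSet o G) (hred : LMReduced o G)
    (hov : ∀ gi ∈ G, ∀ gj ∈ G, ∀ u v : Word n,
        LM o gi * u = v * LM o gj → ¬ WordDvd (LM o gi) v → ¬ WordDvd (LM o gj) u →
          (gi * mono R u - mono R v * gj = 0 ∨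
            HasGroebnerRep o G (gi * mono R u - mono R v * gj)))
    {g g' : FreeAlg R n} (hg : g ∈ G) (hg' : g' ∈ G) {u v u' v' : Word n}
    (h : u * LM o g * v = u' * LM o g' * v') :
    RepP o G (fun w => o.lt w (u * LM o g * v))
      (mono R u * g * mono R v - mono R u' * g' * mono R v') := by
  by_cases hle : u.length ≤ u'.length
  · exact key_aux hmonic hred hov hg hg' h hle
  · have hrep := key_aux hmonic hred hov hg' hg h.symm (by omega)
    have := repP_neg hrep
    rw [neg_sub] at this
    rw [h]
    exact this

end TT
namespace TT

variable {R : Type} [CommRing R] {n : ℕ} {o : MonomialOrdering n} {G : Set (FreeAlg R n)}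

/-- From a representation with all tops strictly below `W`, extract a bound strictly
below `W`. -/
lemma repP_lt_shrink {W : Word n} {f : FreeAlg R n}
    (h : RepP o G (fun w => o.lt w W) f) (hf0 : f ≠ 0) :
    ∃ W', o.lt W' W ∧ RepP o G (fun w => o.le w W') f := by
  classical
  obtain ⟨m, lam, u, v, g, hgG, hfsum, hP⟩ := h
  set t : Fin m → Word n := fun i => u i * LM o (g i) * v i with ht
  set T : Finset (Fin m) := Finset.univ.filter (fun i => lam i ≠ 0) with hT
  have hTne : T.Nonempty := by
    rcases Finset.eq_empty_or_nonempty T with hTe | hTne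
    · exfalso
      apply hf0
      rw [hfsum]
      apply Finset.sum_eq_zero
      intro i _
      have : lam i = 0 := by
        by_contra hl
        have : i ∈ T := by rw [hT]; simp [hl]
        rw [hTe] at this
        simp at this
      rw [this, zero_smul]
    · exact hTne
  obtain ⟨w, hw, hmax⟩ := exists_max o (T.image t) (hTne.image t)
  obtain ⟨i₀, hi₀T, hti₀⟩ := Finset.mem_image.1 hw
  have hi₀lam : lam i₀ ≠ 0 := by
    rw [hT] at hi₀T; simpa using hi₀T
  refine ⟨w, by rw [← hti₀]; exact hP i₀ hi₀lam, m, lam, u, v, g, hgG, hfsum, ?_⟩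
  intro i hi
  have hiT : i ∈ T := by rw [hT]; simp [hi]
  exact hmax _ (Finset.mem_image_of_mem t hiT)

/-- The backward direction of the termination theorem. -/
lemma backward_dir (hmonic : IsMonicSet o G) (hred : LMReduced o G)
    (hov : ∀ gi ∈ G, ∀ gj ∈ G, ∀ u v : Word n,
        LM o gi * u = v * LM o gj → ¬ WordDvd (LM o gi) v → ¬ WordDvd (LM o gj) u →
          (gi * mono R u - mono R v * gj = 0 ∨
            HasGroebnerRep o G (gi * mono R u - mono R v * gj))) :
    IsMonicGB o G (TwoSidedIdeal.span G) := by
  refine ⟨fun g hg => TwoSidedIdeal.subset_span hg, hmonic, ?_⟩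
  intro f hf hf0
  classical
  have hS : {W : Word n | RepP o G (fun w => o.le w W) f}.Nonempty := mem_span_repBdd hf
  obtain ⟨W₀, hW₀, hmin⟩ := o.wellFounded.has_min _ hS
  obtain ⟨m, lam, u, v, g, hgG, hfsum, hP⟩ := hW₀
  set t : Fin m → Word n := fun i => u i * LM o (g i) * v i with ht
  set S : Finset (Fin m) :=
    Finset.univ.filter (fun i => lam i ≠ 0 ∧ t i = W₀) with hSdef
  -- a helper: words appearing in any sandwich are ≤ its top
  have hsupp : ∀ (i : Fin m), ∀ x ∈ (mono R (u i) * g i * mono R (v i)).coeff.support,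
      o.le x (t i) := fun i x hx => le_of_mem_support_sandwich (o := o) hx
  rcases Finset.eq_empty_or_nonempty S with hSe | hSne
  · -- no term achieves W₀: strict representation, contradicting minimality
    exfalso
    have hltrep : RepP o G (fun w => o.lt w W₀) f := by
      refine ⟨m, lam, u, v, g, hgG, hfsum, fun i hi => ?_⟩
      refine lt_of_le_of_ne o (hP i hi) fun he => ?_
      have : i ∈ S := by rw [hSdef]; simp only [Finset.mem_filter, Finset.mem_univ, true_and]
                         exact ⟨hi, he⟩
      rw [hSe] at this
      simp at this
    obtain ⟨W', hlt, hrep'⟩ := repP_lt_shrink hltrep hf0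
    exact hmin W' hrep' hlt
  · -- compute the coefficient of W₀ in f
    have happly : ∀ i : Fin m, i ∈ S →
        (mono R (u i) * g i * mono R (v i)).coeff W₀ = 1 := by
      intro i hi
      rw [hSdef] at hi
      simp only [Finset.mem_filter, Finset.mem_univ, true_and] at hi
      rw [← hi.2]
      show _ = 1
      rw [ht]
      simp only []
      rw [sandwich_apply]
      exact (hmonic _ (hgG i)).2
    have happly0 : ∀ i : Fin m, i ∉ S → lam i ≠ 0 →
        (mono R (u i) * g i * mono R (v i)).coeff W₀ = 0 := by
      intro i hi hlam
      by_contra h0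
      have hWsupp : W₀ ∈ (mono R (u i) * g i * mono R (v i)).coeff.support :=
        Finsupp.mem_support_iff.2 h0
      have h1 : o.le W₀ (t i) := hsupp i _ hWsupp
      have h2 : o.le (t i) W₀ := hP i hlam
      apply hi
      rw [hSdef]
      simp only [Finset.mem_filter, Finset.mem_univ, true_and]
      exact ⟨hlam, le_antisymm o h2 h1⟩
    have hcoeff : f.coeff W₀ = ∑ i ∈ S, lam i := by
      rw [hfsum, MonoidAlgebra.coeff_sum, Finsupp.finset_sum_apply]
      rw [← Finset.sum_filter_add_sum_filter_not Finset.univ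
        (fun i => lam i ≠ 0 ∧ t i = W₀) (fun i => (lam i • (mono R (u i) * g i * mono R (v i))).coeff W₀)]
      rw [show Finset.univ.filter (fun i => lam i ≠ 0 ∧ t i = W₀) = S from rfl]
      have e1 : ∑ i ∈ S, (lam i • (mono R (u i) * g i * mono R (v i))).coeff W₀ = ∑ i ∈ S, lam i := by
        refine Finset.sum_congr rfl fun i hi => ?_
        rw [MonoidAlgebra.coeff_smul_apply, happly i hi, smul_eq_mul, mul_one]
      have e2 : ∑ i ∈ Finset.univ.filter (fun i => ¬(lam i ≠ 0 ∧ t i = W₀)),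
          (lam i • (mono R (u i) * g i * mono R (v i))).coeff W₀ = 0 := by
        refine Finset.sum_eq_zero fun i hi => ?_
        simp only [Finset.mem_filter, Finset.mem_univ, true_and] at hi
        by_cases hlam : lam i = 0
        · rw [hlam, zero_smul]; rfl
        · have hiS : i ∉ S := by
            rw [hSdef]
            simp only [Finset.mem_filter, Finset.mem_univ, true_and]
            exact hi
          rw [MonoidAlgebra.coeff_smul_apply, happly0 i hiS hlam, smul_eq_mul, mul_zero]
      rw [e1, e2, add_zero]
    by_cases hfW : f.coeff W₀ = 0
    · -- cancellation at the top: rewrite using the key lemma, contradiction with minimality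
      exfalso
      have hsum0 : ∑ i ∈ S, lam i = 0 := by rw [← hcoeff]; exact hfW
      obtain ⟨i₀, hi₀⟩ := hSne
      have hti₀ : t i₀ = W₀ := by
        rw [hSdef] at hi₀
        simp only [Finset.mem_filter, Finset.mem_univ, true_and] at hi₀
        exact hi₀.2
      set s : Fin m → FreeAlg R n := fun i => mono R (u i) * g i * mono R (v i) with hs
      have hfeq : f = (∑ i ∈ Finset.univ.filter (fun i => ¬(lam i ≠ 0 ∧ t i = W₀)),
          lam i • s i) + ∑ i ∈ S, lam i • (s i - s i₀) := by
        have e1 : ∑ i ∈ S, lam i • (s i - s i₀)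
            = ∑ i ∈ S, lam i • s i - (∑ i ∈ S, lam i) • s i₀ := by
          rw [Finset.sum_smul]
          rw [← Finset.sum_sub_distrib]
          exact Finset.sum_congr rfl fun i _ => smul_sub _ _ _
        rw [e1, hsum0, zero_smul, sub_zero, add_comm]
        rw [hfsum]
        exact (Finset.sum_filter_add_sum_filter_not Finset.univ _ _).symm
      have hrep2 : RepP o G (fun w => o.lt w W₀) f := by
        rw [hfeq]
        apply repP_add
        · refine repP_sum _ _ fun i hi => ?_
          simp only [Finset.mem_filter, Finset.mem_univ, true_and] at hi
          by_cases hlam : lam i = 0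
          · rw [hlam, zero_smul]; exact repP_zero
          · have hti : t i ≠ W₀ := fun he => hi ⟨hlam, he⟩
            exact repP_smul _ (repP_single (hgG i) (lt_of_le_of_ne o (hP i hlam) hti))
        · refine repP_sum _ _ fun i hi => ?_
          have hti : t i = W₀ := by
            rw [hSdef] at hi
            simp only [Finset.mem_filter, Finset.mem_univ, true_and] at hi
            exact hi.2
          refine repP_smul _ ?_
          have hkey := key_lemma hmonic hred hov (hgG i) (hgG i₀)
            (u := u i) (v := v i) (u' := u i₀) (v' := v i₀) (by rw [show u i * LM o (g i) * v i = t i from rfl, show u i₀ * LM o (g i₀) * v i₀ = t i₀ from rfl, hti, hti₀])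
          rw [show u i * LM o (g i) * v i = t i from rfl, hti] at hkey
          exact hkey
      obtain ⟨W', hlt, hrep'⟩ := repP_lt_shrink hrep2 hf0
      exact hmin W' hrep' hlt
    · -- the leading monomial of f is W₀ and is divisible by some LM(g)
      have hWsupp : W₀ ∈ f.coeff.support := Finsupp.mem_support_iff.2 hfW
      have h1 : o.le W₀ (LM o f) := le_lm o hWsupp
      have h2 : o.le (LM o f) W₀ := by
        have hmem : LM o f ∈
            (∑ i : Fin m, lam i • (mono R (u i) * g i * mono R (v i))).coeff.support := by
          rw [← hfsum]; exact lm_mem o hf0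
        obtain ⟨i, _, hmem⟩ := mem_support_sum hmem
        have hlam : lam i ≠ 0 := by
          intro h0
          rw [h0, zero_smul] at hmem
          simp at hmem
        have : (LM o f) ∈ (mono R (u i) * g i * mono R (v i)).coeff.support :=
          by rw [MonoidAlgebra.coeff_smul] at hmem; exact Finsupp.support_smul hmem
        exact le_trans o (hsupp i _ this) (hP i hlam)
      have hLMf : LM o f = W₀ := le_antisymm o h2 h1
      obtain ⟨i₀, hi₀⟩ := hSne
      have hti₀ : t i₀ = W₀ := by
        rw [hSdef] at hi₀
        simp only [Finset.mem_filter, Finset.mem_univ, true_and] at hi₀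
        exact hi₀.2
      exact ⟨g i₀, hgG i₀, u i₀, v i₀, by rw [hLMf, ← hti₀]⟩

end TT
/-- **Theorem 2.5 (Termination theorem).** Let `G` be an LM-reduced monic subset of the free
`R`-algebra `R⟨X₁,...,Xₙ⟩`.  Then `G` is an (LM-reduced monic) Gröbner basis of the ideal
`I = ⟨G⟩` if and only if for each pair `gᵢ, gⱼ ∈ G` (including `gᵢ = gⱼ`), every overlap
element `o(gᵢ,u; v,gⱼ) = gᵢ·u − v·gⱼ` (where `LM(gᵢ)·u = v·LM(gⱼ)`, `LM(gᵢ) ∤ v`,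
`LM(gⱼ) ∤ u`) is reduced to zero by division by `G`, i.e. is zero or has a Gröbner
representation. -/
theorem termination_theorem {R : Type} [CommRing R] {n : ℕ} (o : MonomialOrdering n)
    (G : Set (FreeAlg R n)) (hmonic : IsMonicSet o G) (hred : LMReduced o G) :
    IsMonicGB o G (TwoSidedIdeal.span G) ↔
      ∀ gi ∈ G, ∀ gj ∈ G, ∀ u v : Word n,
        LM o gi * u = v * LM o gj → ¬ WordDvd (LM o gi) v → ¬ WordDvd (LM o gj) u →
          (gi * mono R u - mono R v * gj = 0 ∨
            HasGroebnerRep o G (gi * mono R u - mono R v * gj)) := by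
  constructor
  · intro hGB
    exact TT.forward_dir hmonic hGB
  · intro hov
    exact TT.backward_dir hmonic hred hov
end
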